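/- Any closed planar trivalent graph contains either a face with at most four edges, or two adjacent pentagonal faces (a pentapent), or a pentagonal face adjacent to a hexagonal face (a hexapent). -/

import Mathlib

/-- The setoid on darts whose classes are the cycles (orbits) of a permutation. -/
def Equiv.Perm.cycleSetoid {D : Type*} (f : Equiv.Perm D) : Setoid D :=
  ⟨f.SameCycle, ⟨fun x => Equiv.Perm.SameCycle.refl f x,
    fun h => h.symm, fun h h' => h.trans h'⟩⟩

/-- A closed planar trivalent graph, encoded as a combinatorial map on the sphere:
a finite set of darts `D`, a fixed-point-free involution `α` pairing darts into
edges, and a permutation `σ` whose orbits (all of size `3`) are the vertices.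
Faces are the orbits of `σ * α`.  Connectivity is transitivity of the group
generated by `σ` and `α`, and the embedding in the sphere is expressed by the
Euler formula `V - E + F = 2` (with `E = |D|/2`). -/
structure ClosedPlanarTrivalentGraph where
  D : Type
  fintypeD : Fintype D
  σ : Equiv.Perm D
  α : Equiv.Perm D
  α_invol : ∀ d, α (α d) = d
  α_fpf : ∀ d, α d ≠ d
  σ_cube : ∀ d, σ (σ (σ d)) = d
  σ_fpf : ∀ d, σ d ≠ d
  connected : ∀ d d' : D, ∃ g ∈ Subgroup.closure ({σ, α} : Set (Equiv.Perm D)), g d = d'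
  euler : 2 * (Nat.card (Quotient σ.cycleSetoid) + Nat.card (Quotient (σ * α).cycleSetoid))
            = Nat.card D + 4

namespace ClosedPlanarTrivalentGraph

variable (G : ClosedPlanarTrivalentGraph)

instance : Fintype G.D := G.fintypeD

/-- The face permutation. -/
def φ : Equiv.Perm G.D := G.σ * G.α

/-- The faces of the graph: orbits of the face permutation. -/
def Faces := Quotient G.φ.cycleSetoid

/-- The face containing a given dart. -/
def faceOf (d : G.D) : G.Faces := Quotient.mk G.φ.cycleSetoid d

/-- The number of edges of a face (the size of the corresponding orbit of darts). -/
noncomputable def faceSize (F : G.Faces) : ℕ := Nat.card {d : G.D // G.faceOf d = F}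

noncomputable instance : Fintype G.Faces :=
  @Quotient.fintype _ _ G.φ.cycleSetoid (fun _ _ => Classical.dec _)

/-- Two faces are adjacent if they are distinct and share an edge. -/
def FaceAdj (F F' : G.Faces) : Prop :=
  F ≠ F' ∧ ∃ d : G.D, G.faceOf d = F ∧ G.faceOf (G.α d) = F'

end ClosedPlanarTrivalentGraph

namespace ClosedPlanarTrivalentGraph

variable {G : ClosedPlanarTrivalentGraph}

lemma phi_apply (d : G.D) : G.φ d = G.σ (G.α d) := rfl

lemma faceOf_eq_iff {a b : G.D} : G.faceOf a = G.faceOf b ↔ G.φ.SameCycle a b :=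
  ⟨fun h => Quotient.exact h, fun h => Quotient.sound h⟩

lemma faceOf_phi (d : G.D) : G.faceOf (G.φ d) = G.faceOf d :=
  faceOf_eq_iff.mpr (Equiv.Perm.sameCycle_apply_left.mpr (Equiv.Perm.SameCycle.refl _ _))

lemma hA1 (d : G.D) : G.φ (G.α (G.φ d)) = G.σ (G.σ (G.α d)) := by
  show G.σ (G.α (G.α (G.σ (G.α d)))) = _
  rw [G.α_invol]

lemma hA2 (d : G.D) : G.φ (G.α (G.σ (G.σ (G.α d)))) = G.α d := by
  show G.σ (G.α (G.α (G.σ (G.σ (G.α d))))) = _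
  rw [G.α_invol]
  exact G.σ_cube _

lemma self1 (d : G.D) (h : G.φ d = G.α d) : False :=
  G.σ_fpf (G.α d) ((phi_apply d).symm.trans h)

lemma self2 (hfpf : ∀ x, G.φ x ≠ x) (d : G.D) (h : G.φ (G.φ d) = G.α d) : False := by
  have hb : G.σ (G.α (G.σ (G.α d))) = G.α d := h
  have h3 : G.σ (G.σ (G.σ (G.α d))) = G.α d := G.σ_cube _
  have h' : G.α (G.σ (G.α d)) = G.σ (G.σ (G.α d)) := G.σ.injective (hb.trans h3.symm)
  have hw : G.α (G.σ (G.σ (G.α d))) = G.σ (G.α d) := by rw [← h']; exact G.α_invol _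
  exact hfpf (G.σ (G.σ (G.α d))) (by rw [phi_apply, hw])

end ClosedPlanarTrivalentGraph


open Finset ClosedPlanarTrivalentGraph in
/-- Any closed planar trivalent graph contains a face with at most four edges,
or a pentapent (two adjacent pentagonal faces), or a hexapent (a pentagonal
face adjacent to a hexagonal face). -/
theorem stmt_1 (G : ClosedPlanarTrivalentGraph) :
    (∃ F : G.Faces, G.faceSize F ≤ 4) ∨
    (∃ F F' : G.Faces, G.FaceAdj F F' ∧ G.faceSize F = 5 ∧ G.faceSize F' = 5) ∨
    (∃ F F' : G.Faces, G.FaceAdj F F' ∧ G.faceSize F = 5 ∧ G.faceSize F' = 6) := by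
  classical
  by_contra hcon
  have hA : ∀ F : G.Faces, 5 ≤ G.faceSize F := by
    intro F
    by_contra hx
    exact hcon (Or.inl ⟨F, by omega⟩)
  have hB : ∀ {F F' : G.Faces}, G.FaceAdj F F' → G.faceSize F = 5 → G.faceSize F' = 5 → False :=
    fun h p q => hcon (Or.inr (Or.inl ⟨_, _, h, p, q⟩))
  have hC : ∀ {F F' : G.Faces}, G.FaceAdj F F' → G.faceSize F = 5 → G.faceSize F' = 6 → False :=
    fun h p q => hcon (Or.inr (Or.inr ⟨_, _, h, p, q⟩))
  set n : G.D → ℕ := fun d => G.faceSize (G.faceOf d) with hn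
  -- fixed-point freeness of φ
  have hfpf : ∀ d, G.φ d ≠ d := by
    intro d hd
    have hsub : ∀ e, G.faceOf e = G.faceOf d → e = d := by
      intro e he
      obtain ⟨i, hi⟩ := (faceOf_eq_iff.mp he).symm
      rw [← hi, Equiv.Perm.zpow_apply_eq_self_of_apply_eq_self hd]
    have hle : G.faceSize (G.faceOf d) ≤ 1 := by
      rw [show G.faceSize (G.faceOf d)
            = Fintype.card {e : G.D // G.faceOf e = G.faceOf d} from Nat.card_eq_fintype_card]
      exact Fintype.card_le_one_iff.mpr
        (fun a b => Subtype.ext (by rw [hsub a a.2, hsub b b.2]))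
    have := hA (G.faceOf d)
    omega
  -- fiber cards
  have hface_card : ∀ F : G.Faces,
      #(Finset.univ.filter fun d => G.faceOf d = F) = G.faceSize F := by
    intro F
    rw [ClosedPlanarTrivalentGraph.faceSize, Nat.card_eq_fintype_card, Fintype.card_subtype]
  -- orbit return
  have hpow : ∀ d, (G.φ ^ n d) d = d := by
    intro d
    have hc := G.φ.isCycle_cycleOf (hfpf d)
    have hfib : (Finset.univ.filter fun e => G.faceOf e = G.faceOf d)
        = (G.φ.cycleOf d).support := by
      ext y
      simp only [Finset.mem_filter, Finset.mem_univ, true_and,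
        Equiv.Perm.mem_support_cycleOf_iff]
      constructor
      · intro h
        exact ⟨(faceOf_eq_iff.mp h).symm, Equiv.Perm.mem_support.mpr (hfpf d)⟩
      · intro h
        exact faceOf_eq_iff.mpr h.1.symm
    have hsz : n d = (G.φ.cycleOf d).support.card := by
      rw [hn]
      simp only
      rw [← hface_card (G.faceOf d), hfib]
    rw [← Equiv.Perm.cycleOf_pow_apply_self, hsz, ← hc.orderOf, pow_orderOf_eq_one]
    rfl
  have hnpos : ∀ d, 5 ≤ n d := fun d => hA (G.faceOf d)
  have hexists : ∀ d e, G.faceOf e = G.faceOf d → ∃ i < n d, (G.φ ^ i) d = e := by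
    intro d e he
    obtain ⟨j, _, hj⟩ := (faceOf_eq_iff.mp he).symm.exists_pow_eq'
    refine ⟨j % n d, Nat.mod_lt _ (by have := hnpos d; omega), ?_⟩
    rw [← hj]
    conv_rhs => rw [← Nat.mod_add_div j (n d)]
    rw [pow_add, Equiv.Perm.mul_apply, pow_mul,
      Equiv.Perm.pow_apply_eq_self_of_apply_eq_self (hpow d)]
  -- pentagons contain no edge twice
  have pent_self : ∀ d, n d = 5 → G.faceOf (G.α d) = G.faceOf d → False := by
    intro d h5 hf
    obtain ⟨i, hi, hie⟩ := hexists d (G.α d) hf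
    rw [h5] at hi
    have h5p : (G.φ ^ 5) d = d := by rw [← h5]; exact hpow d
    have hstep : ∀ k, G.φ ((G.φ ^ k) d) = (G.φ ^ (k + 1)) d := by
      intro k; rw [pow_succ']; rfl
    interval_cases i
    · exact G.α_fpf d (by simp at hie; exact hie.symm)
    · exact self1 d (by rw [pow_one] at hie; exact hie)
    · exact self2 hfpf d (by rw [← hie, sq]; rfl)
    · refine self2 hfpf (G.α d) ?_
      rw [G.α_invol, ← hie, hstep, hstep, h5p]
    · refine self1 (G.α d) ?_
      rw [G.α_invol, ← hie, hstep, h5p]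
  -- no two consecutive pentagonal neighbours
  have no_consec : ∀ d, n (G.α d) = 5 → n (G.α (G.φ d)) = 5 → False := by
    intro d h5 h5'
    have hz1 : G.faceOf (G.σ (G.σ (G.α d))) = G.faceOf (G.α (G.φ d)) := by
      rw [← hA1 d, faceOf_phi]
    have hz2 : G.faceOf (G.α (G.σ (G.σ (G.α d)))) = G.faceOf (G.α d) := by
      rw [← faceOf_phi (G.α (G.σ (G.σ (G.α d)))), hA2 d]
    by_cases hAC : G.faceOf (G.α (G.φ d)) = G.faceOf (G.α d)
    · refine pent_self (G.σ (G.σ (G.α d))) ?_ ?_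
      · rw [hn]; simp only; rw [hz1]; exact h5'
      · rw [hz2, ← hAC, ← hz1]
    · refine hB (F := G.faceOf (G.σ (G.σ (G.α d))))
        (F' := G.faceOf (G.α (G.σ (G.σ (G.α d))))) ⟨?_, _, rfl, rfl⟩ ?_ ?_
      · rw [hz1, hz2]; exact hAC
      · rw [hz1]; exact h5'
      · rw [hz2]; exact h5
  -- vertex count
  have hvert : Fintype.card G.D = 3 * Nat.card (Quotient G.σ.cycleSetoid) := by
    have hfib3 : ∀ v : Quotient G.σ.cycleSetoid,
        #(Finset.univ.filter fun d => Quotient.mk G.σ.cycleSetoid d = v) = 3 := by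
      intro v
      obtain ⟨d, rfl⟩ := Quotient.exists_rep v
      have hset : (Finset.univ.filter fun e => Quotient.mk G.σ.cycleSetoid e
            = Quotient.mk G.σ.cycleSetoid d)
          = {d, G.σ d, G.σ (G.σ d)} := by
        ext y
        simp only [Finset.mem_filter, Finset.mem_univ, true_and, Finset.mem_insert,
          Finset.mem_singleton]
        constructor
        · intro h
          have hs : G.σ.SameCycle d y := (Quotient.exact h).symm
          obtain ⟨j, -, hj⟩ := hs.exists_pow_eq'
          rw [← hj]
          clear hj
          induction j with
          | zero => left; rfl
          | succ k ih =>
            rw [pow_succ', Equiv.Perm.mul_apply]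
            rcases ih with h | h | h <;> rw [h]
            · right; left; rfl
            · right; right; rfl
            · left; exact G.σ_cube d
        · rintro (rfl | rfl | rfl)
          · rfl
          · exact Quotient.sound (Equiv.Perm.sameCycle_apply_left.mpr
              (Equiv.Perm.SameCycle.refl _ _))
          · exact Quotient.sound (Equiv.Perm.sameCycle_apply_left.mpr
              (Equiv.Perm.sameCycle_apply_left.mpr (Equiv.Perm.SameCycle.refl _ _)))
      rw [hset]
      have h1 : G.σ d ≠ d := G.σ_fpf d
      have h2 : G.σ (G.σ d) ≠ d := by
        intro h
        have h' := congrArg G.σ h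
        rw [G.σ_cube d] at h'
        exact G.σ_fpf d h'.symm
      have h3 : G.σ (G.σ d) ≠ G.σ d := fun h => G.σ_fpf d (G.σ.injective h)
      rw [Finset.card_insert_of_notMem (by
          simp only [Finset.mem_insert, Finset.mem_singleton]
          push_neg
          exact ⟨Ne.symm h1, Ne.symm h2⟩),
        Finset.card_insert_of_notMem (by simpa using Ne.symm h3), Finset.card_singleton]
    rw [← Finset.card_univ, Finset.card_eq_sum_card_fiberwise
      (f := fun d => Quotient.mk G.σ.cycleSetoid d) (t := Finset.univ)
      (fun _ _ => Finset.mem_univ _)]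
    rw [Finset.sum_congr rfl (fun v _ => hfib3 v), Finset.sum_const, Finset.card_univ,
      smul_eq_mul, Nat.card_eq_fintype_card]
    ring
  -- Euler consequence
  have heuler : 6 * Fintype.card G.Faces = Fintype.card G.D + 12 := by
    have he := G.euler
    have h1 : Nat.card (Quotient (G.σ * G.α).cycleSetoid) = Fintype.card G.Faces :=
      Nat.card_eq_fintype_card
    have h2 : Nat.card G.D = Fintype.card G.D := Nat.card_eq_fintype_card
    rw [h1, h2] at he
    omega
  -- the charge function
  set c : G.D → ℚ := fun d => 6 / (n d : ℚ) - 1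
    + ((if n (G.α d) = 5 then (1 : ℚ) else 0) - (if n d = 5 then (1 : ℚ) else 0)) / 5
    with hc
  -- total charge is 12
  have hsum12 : ∑ d : G.D, c d = 12 := by
    have htrans : ∑ d : G.D, (if n (G.α d) = 5 then (1 : ℚ) else 0)
        = ∑ d : G.D, (if n d = 5 then (1 : ℚ) else 0) :=
      Equiv.sum_comp G.α fun d => if n d = 5 then (1 : ℚ) else 0
    have hmain : ∑ d : G.D, (6 / (n d : ℚ)) = 6 * Fintype.card G.Faces := by
      rw [← Finset.sum_fiberwise Finset.univ (fun d => G.faceOf d)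
        (fun d => 6 / (n d : ℚ))]
      have hinner : ∀ F : G.Faces,
          (∑ d ∈ Finset.univ.filter (fun d => G.faceOf d = F), 6 / (n d : ℚ)) = 6 := by
        intro F
        have hval : ∀ d ∈ Finset.univ.filter (fun d => G.faceOf d = F),
            6 / (n d : ℚ) = 6 / (G.faceSize F : ℚ) := by
          intro d hd
          rw [hn]; simp only
          rw [(Finset.mem_filter.mp hd).2]
        rw [Finset.sum_congr rfl hval, Finset.sum_const, hface_card F, nsmul_eq_mul]
        have : (G.faceSize F : ℚ) ≠ 0 := by
          have := hA F
          positivity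
        field_simp
      rw [Finset.sum_congr rfl (fun F _ => hinner F), Finset.sum_const, Finset.card_univ,
        nsmul_eq_mul, mul_comm]
    have hexp : ∑ d : G.D, c d
        = (∑ d : G.D, (6 / (n d : ℚ))) - Fintype.card G.D
          + ((∑ d : G.D, (if n (G.α d) = 5 then (1 : ℚ) else 0))
            - ∑ d : G.D, (if n d = 5 then (1 : ℚ) else 0)) / 5 := by
      rw [hc]
      rw [Finset.sum_add_distrib, Finset.sum_sub_distrib, ← Finset.sum_div,
        Finset.sum_sub_distrib, Finset.sum_const, Finset.card_univ, nsmul_eq_mul, mul_one]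
    rw [hexp, htrans, hmain, sub_self, zero_div, add_zero]
    have : (6 : ℚ) * Fintype.card G.Faces = Fintype.card G.D + 12 := by
      exact_mod_cast congrArg (Nat.cast : ℕ → ℚ) heuler
    linarith
  -- per-face bound
  have hface_le : ∀ F : G.Faces,
      (∑ d ∈ Finset.univ.filter (fun d => G.faceOf d = F), c d) ≤ 0 := by
    intro F
    have hm5 := hA F
    have hval : ∀ d ∈ Finset.univ.filter (fun d => G.faceOf d = F),
        c d = (6 / (G.faceSize F : ℚ) - 1 - (if G.faceSize F = 5 then (1 : ℚ) else 0) / 5)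
          + (if n (G.α d) = 5 then (1 : ℚ) else 0) / 5 := by
      intro d hd
      have hnd : n d = G.faceSize F := by
        rw [hn]; simp only; rw [(Finset.mem_filter.mp hd).2]
      rw [hc]; simp only [hnd]; ring
    rw [Finset.sum_congr rfl hval, Finset.sum_add_distrib, ← Finset.sum_div,
      Finset.sum_boole, Finset.sum_const, hface_card F, nsmul_eq_mul]
    set S := (Finset.univ.filter fun d => G.faceOf d = F).filter
      (fun d => n (G.α d) = 5) with hS
    rcases Nat.lt_or_ge (G.faceSize F) 7 with hm7 | hm7
    · -- faceSize F ∈ {5, 6} : no pentagonal neighbours at all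
      have hSempty : S = ∅ := by
        rw [Finset.eq_empty_iff_forall_notMem]
        intro d hd
        rw [hS, Finset.mem_filter, Finset.mem_filter] at hd
        obtain ⟨⟨-, hdF⟩, hd5⟩ := hd
        by_cases hsame : G.faceOf (G.α d) = G.faceOf d
        · -- same face on both sides
          have hnd5 : n d = 5 := by
            have : n (G.α d) = n d := by rw [hn]; simp only; rw [hsame]
            omega
          exact pent_self d hnd5 hsame
        · rcases Nat.lt_or_ge (G.faceSize F) 6 with h6 | h6
          · -- pentagon
            refine hB (F := F) (F' := G.faceOf (G.α d)) ⟨?_, d, hdF, rfl⟩ (by omega) hd5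
            rw [← hdF]; exact fun h => hsame h.symm
          · -- hexagon
            refine hC (F := G.faceOf (G.α d)) (F' := F) ⟨?_, G.α d, rfl, ?_⟩ hd5 (by omega)
            · rw [← hdF]
              intro h
              have : G.faceSize (G.faceOf (G.α d)) = G.faceSize (G.faceOf d) := by rw [h]
              rw [hdF] at this
              have h5' : n (G.α d) = 5 := hd5
              rw [hn] at h5'; simp only at h5'
              omega
            · rw [G.α_invol]; exact hdF
      rw [hSempty]
      simp only [Finset.card_empty, Nat.cast_zero, zero_div, add_zero]
      interval_cases h : G.faceSize F <;> norm_num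
    · -- big faces
      have hmaps : ∀ d ∈ S, G.φ d ∈ (Finset.univ.filter fun d => G.faceOf d = F).filter
          (fun d => ¬ n (G.α d) = 5) := by
        intro d hd
        rw [hS, Finset.mem_filter, Finset.mem_filter] at hd
        rw [Finset.mem_filter, Finset.mem_filter]
        exact ⟨⟨Finset.mem_univ _, by rw [faceOf_phi]; exact hd.1.2⟩,
          fun h => no_consec d hd.2 h⟩
      have hcard := Finset.card_le_card_of_injOn _ hmaps
        (fun a _ b _ h => G.φ.injective h)
      have hpart := Finset.card_filter_add_card_filter_not
        (s := Finset.univ.filter fun d => G.faceOf d = F) (p := fun d => n (G.α d) = 5)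
      rw [hface_card F] at hpart
      rw [← hS] at hpart
      have hs2 : #S + #S ≤ G.faceSize F := by omega
      rw [if_neg (by omega)]
      have hm : (7 : ℚ) ≤ (G.faceSize F : ℚ) := by exact_mod_cast hm7
      have hs : (#S : ℚ) + (#S : ℚ) ≤ (G.faceSize F : ℚ) := by exact_mod_cast hs2
      have hmne : (G.faceSize F : ℚ) ≠ 0 := by positivity
      have hexpand : (G.faceSize F : ℚ) * (6 / (G.faceSize F : ℚ) - 1 - 0 / 5)
          = 6 - (G.faceSize F : ℚ) := by field_simp; ring
      rw [hexpand]
      linarith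
  have hcontr : (12 : ℚ) ≤ 0 := by
    rw [← hsum12, ← Finset.sum_fiberwise Finset.univ (fun d => G.faceOf d) c]
    exact Finset.sum_nonpos fun F _ => hface_le F
  norm_num at hcontr
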